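/- Every lifted-graphic matroid is quasi-graphic, i.e., every lifted-graphic matroid has a framework. -/

import Mathlib

open Set Matroid
open scoped Classical

namespace QuasiGraphicPaper

universe u v

/-- A finite multigraph: a set `V` of vertices (in an ambient type `α`), a set `E` of
edges (in an ambient type `β`), and an incidence function assigning to each edge an
unordered pair of endpoints; loop-edges and parallel edges are allowed. -/
structure Graph (α : Type u) (β : Type v) where
  V : Set α
  E : Set β
  ends : β → Sym2 α
  finV : V.Finite
  finE : E.Finite
  ends_mem : ∀ ⦃e⦄, e ∈ E → ∀ ⦃x⦄, x ∈ ends e → x ∈ V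

namespace Graph

variable {α : Type u} {β : Type v}

/-- `e` is a loop-edge of `G` at the vertex `v`. -/
def IsLoopAt (G : Graph α β) (e : β) (v : α) : Prop :=
  e ∈ G.E ∧ G.ends e = Sym2.diag v

/-- `loops_G(v)`: the set of loop-edges of `G` at `v`. -/
def loopsAt (G : Graph α β) (v : α) : Set β := {e | G.IsLoopAt e v}

/-- Two vertices are adjacent if some edge of `G` has them as its two endpoints. -/
def Adj (G : Graph α β) (u v : α) : Prop := ∃ e ∈ G.E, G.ends e = s(u, v)

/-- A graph is connected if any two of its vertices are joined by a walk.
(The graph with no vertices is connected.) -/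
def Connected (G : Graph α β) : Prop :=
  ∀ u ∈ G.V, ∀ v ∈ G.V, Relation.ReflTransGen G.Adj u v

/-- Delete a set `X` of vertices: remove the vertices in `X` and all edges meeting `X`. -/
def deleteVertices (G : Graph α β) (X : Set α) : Graph α β where
  V := G.V \ X
  E := {e ∈ G.E | ∀ x ∈ G.ends e, x ∉ X}
  ends := G.ends
  finV := G.finV.diff
  finE := G.finE.subset (sep_subset _ _)
  ends_mem := fun e he x hx => ⟨G.ends_mem he.1 hx, he.2 x hx⟩

/-- `G − v`: delete the single vertex `v`. -/
abbrev deleteVertex (G : Graph α β) (v : α) : Graph α β := G.deleteVertices {v}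

/-- `G − e`: delete the edge `e` (keeping all vertices). -/
def deleteEdge (G : Graph α β) (e : β) : Graph α β where
  V := G.V
  E := G.E \ {e}
  ends := G.ends
  finV := G.finV
  finE := G.finE.diff
  ends_mem := fun f hf x hx => G.ends_mem hf.1 hx

/-- `G[X]`: the subgraph of `G` with edge set `X` (intersected with `E(G)`) and
no isolated vertices. -/
def restrictEdges (G : Graph α β) (X : Set β) : Graph α β where
  V := {v | ∃ e ∈ X ∩ G.E, v ∈ G.ends e}
  E := X ∩ G.E
  ends := G.ends
  finV := G.finV.subset (by rintro v ⟨e, ⟨-, he⟩, hv⟩; exact G.ends_mem he hv)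
  finE := G.finE.subset inter_subset_right
  ends_mem := fun e he x hx => ⟨e, he, hx⟩

/-- The connected component of `G` containing the vertex `v`, as a graph. -/
def componentOf (G : Graph α β) (v : α) : Graph α β where
  V := {u ∈ G.V | Relation.ReflTransGen G.Adj v u}
  E := {e ∈ G.E | ∀ x ∈ G.ends e, Relation.ReflTransGen G.Adj v x}
  ends := G.ends
  finV := G.finV.subset (sep_subset _ _)
  finE := G.finE.subset (sep_subset _ _)
  ends_mem := fun e he x hx => ⟨G.ends_mem he.1 hx, he.2 x hx⟩

/-- `H` is a connected component of `G`. -/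
def IsComponentOf (H G : Graph α β) : Prop := ∃ v ∈ G.V, H = G.componentOf v

/-- The number of connected components of `G`. -/
noncomputable def ncomponents (G : Graph α β) : ℕ :=
  {H : Graph α β | H.IsComponentOf G}.ncard

/-- `G` has at most two connected components: among any three vertices, two are joined. -/
def AtMostTwoComponents (G : Graph α β) : Prop :=
  ∀ u ∈ G.V, ∀ v ∈ G.V, ∀ w ∈ G.V,
    Relation.ReflTransGen G.Adj u v ∨ Relation.ReflTransGen G.Adj u w ∨
      Relation.ReflTransGen G.Adj v w

/-- The degree of a vertex: loop-edges count twice. -/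
noncomputable def degree (G : Graph α β) (v : α) : ℕ :=
  ({e ∈ G.E | v ∈ G.ends e ∧ ¬ (G.ends e).IsDiag}).ncard +
    2 * ({e ∈ G.E | G.ends e = Sym2.diag v}).ncard

/-- `G` is a cycle: it is connected, has at least one edge, and every vertex has
degree two. -/
def IsCycleGraph (G : Graph α β) : Prop :=
  G.E.Nonempty ∧ G.Connected ∧ ∀ v ∈ G.V, G.degree v = 2

/-- `C` is (the edge set of) a cycle of `G`. -/
def CycleSet (G : Graph α β) (C : Set β) : Prop :=
  C ⊆ G.E ∧ (G.restrictEdges C).IsCycleGraph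

/-- A forest: a graph with no cycles (in particular no loop-edges). -/
def IsForest (G : Graph α β) : Prop := ∀ C, ¬ G.CycleSet C

/-- `H` is a subgraph of `G`. -/
def IsSubgraph (H G : Graph α β) : Prop := H.V ⊆ G.V ∧ H.E ⊆ G.E ∧ H.ends = G.ends

/-- `G` is `k`-connected if `G − X` is connected for every vertex set `X` with `|X| < k`. -/
def KConnected (G : Graph α β) (k : ℕ) : Prop :=
  ∀ X : Set α, X.encard < k → (G.deleteVertices X).Connected

/-- A theta: a `2`-connected graph with exactly two vertices of degree three, all
other vertices having degree two. -/
def IsTheta (H : Graph α β) : Prop :=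
  H.KConnected 2 ∧
    ∃ a ∈ H.V, ∃ b ∈ H.V, a ≠ b ∧ H.degree a = 3 ∧ H.degree b = 3 ∧
      ∀ v ∈ H.V, v ≠ a → v ≠ b → H.degree v = 2

/-- `G / e`: contract the non-loop edge `e` with endpoints `x` and `y`
(identifying `y` with `x` and deleting `e`). -/
noncomputable def contractEdge (G : Graph α β) (e : β) (x y : α) (he : e ∈ G.E)
    (hxy : G.ends e = s(x, y)) (hne : x ≠ y) : Graph α β where
  V := G.V \ {y}
  E := G.E \ {e}
  ends := fun f => (G.ends f).map (fun w => if w = y then x else w)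
  finV := G.finV.diff
  finE := G.finE.diff
  ends_mem := by
    rintro f ⟨hf, -⟩ z hz
    rw [Sym2.mem_map] at hz
    obtain ⟨w, hw, rfl⟩ := hz
    by_cases hwy : w = y
    · rw [if_pos hwy]
      have hx : x ∈ G.ends e := by rw [hxy]; exact Sym2.mem_mk_left x y
      exact ⟨G.ends_mem he hx, by simp [hne]⟩
    · rw [if_neg hwy]
      exact ⟨G.ends_mem hf hw, by simp [hwy]⟩

/-- `G ∘ e`: for a loop-edge `e` at a vertex `v` which is the unique loop-edge at `v`,
delete `v` and `e`, and replace every other edge `f = vw` at `v` by a loop-edge at `w`. -/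
noncomputable def circ (G : Graph α β) (e : β) (v : α)
    (hno : ∀ f ∈ G.E, G.ends f = Sym2.diag v → f = e) : Graph α β where
  V := G.V \ {v}
  E := G.E \ {e}
  ends := fun f =>
    if h : f ∈ G.E ∧ f ≠ e ∧ v ∈ G.ends f then Sym2.diag (Sym2.Mem.other h.2.2)
    else G.ends f
  finV := G.finV.diff
  finE := G.finE.diff
  ends_mem := by
    rintro f ⟨hf, hfe⟩ z hz
    have hfe' : f ≠ e := fun h' => hfe (by simp [h'])
    by_cases h : f ∈ G.E ∧ f ≠ e ∧ v ∈ G.ends f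
    · rw [dif_pos h] at hz
      have hze : z = Sym2.Mem.other h.2.2 := by
        have h2 : z ∈ s(Sym2.Mem.other h.2.2, Sym2.Mem.other h.2.2) := hz
        rw [Sym2.mem_iff] at h2
        tauto
      subst hze
      refine ⟨G.ends_mem hf (Sym2.other_mem h.2.2), ?_⟩
      simp only [mem_singleton_iff]
      intro hzv
      apply h.2.1
      apply hno f hf
      show G.ends f = s(v, v)
      rw [← Sym2.other_spec h.2.2, hzv]
    · rw [dif_neg h] at hz
      refine ⟨G.ends_mem hf hz, ?_⟩
      simp only [mem_singleton_iff]
      intro hzv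
      subst hzv
      exact h ⟨hf, hfe', hz⟩

end Graph

/-! ### Matroid notions -/

variable {α : Type u} {β : Type v}

/-- The rank `r_M(X)` of a set `X` in a matroid `M`: the maximum size of an
independent subset of `X`. -/
noncomputable def rank (M : Matroid β) (X : Set β) : ℕ :=
  (⨆ I ∈ {I : Set β | M.Indep I ∧ I ⊆ X}, I.encard).toNat

/-- `C` is a circuit of `M` : a minimal dependent set. -/
def IsCircuit (M : Matroid β) (C : Set β) : Prop :=
  M.Dep C ∧ ∀ D, D ⊂ C → M.Indep D

/-- `M \ D` : delete the set `D` from the matroid `M`. -/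
def deleteM (M : Matroid β) (D : Set β) : Matroid β := M ↾ (M.E \ D)

/-- `M / C` : contract the set `C` in the matroid `M`. -/
def contractM (M : Matroid β) (C : Set β) : Matroid β := (M✶ ↾ (M✶.E \ C))✶

/-- `G` is a weak framework for `M`: conditions (1)–(3). -/
def WeakFramework (G : Graph α β) (M : Matroid β) : Prop :=
  G.E = M.E ∧
  (∀ H : Graph α β, H.IsComponentOf G → rank M H.E ≤ H.V.ncard) ∧
  (∀ v ∈ G.V,
    M.closure (G.deleteVertex v).E ⊆ (G.deleteVertex v).E ∪ G.loopsAt v)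

/-- `G` is a framework for `M`: conditions (1)–(4). -/
def Framework (G : Graph α β) (M : Matroid β) : Prop :=
  WeakFramework G M ∧
    ∀ C, IsCircuit M C → (G.restrictEdges C).AtMostTwoComponents

/-- `M` is the cycle matroid `M(G)` of `G` : the ground set of `M` is `E(G)`, and the
circuits of `M` are exactly the edge sets of cycles of `G`. -/
def IsCycleMatroidOf (G : Graph α β) (M : Matroid β) : Prop :=
  M.E = G.E ∧ ∀ C, IsCircuit M C ↔ G.CycleSet C

/-- A matroid is graphic if it is the cycle matroid of some graph. -/
def Graphic (M : Matroid β) : Prop :=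
  ∃ (γ : Type v) (G : Graph γ β), IsCycleMatroidOf G M

/-- A matroid is quasi-graphic if it has a framework. -/
def QuasiGraphic (M : Matroid β) : Prop :=
  ∃ (γ : Type v) (G : Graph γ β), Framework G M

/-- `M` is a lift of `N` if some single-element extension `M'` of `M` satisfies
`M' \ e = M` and `M' / e = N`. -/
def IsLiftOf (M N : Matroid β) : Prop :=
  ∃ M' : Matroid (Option β), (none : Option β) ∈ M'.E ∧
    deleteM M' {none} = M.map some (Option.some_injective β).injOn ∧
    contractM M' {none} = N.map some (Option.some_injective β).injOn

/-- `M` is a lifted-graphic matroid: for some single-element extension `M'` of `M`,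
`M' / e` is graphic. -/
def LiftedGraphic (M : Matroid β) : Prop :=
  ∃ M' : Matroid (Option β), (none : Option β) ∈ M'.E ∧
    deleteM M' {none} = M.map some (Option.some_injective β).injOn ∧
    Graphic (contractM M' {none})

/-- `(M, V)` is a framed matroid: `V` is a basis of `M` and every element of `M` is
spanned by a subset of `V` with at most two elements. -/
def FramedMatroid {γ : Type u} (M : Matroid γ) (V : Set γ) : Prop :=
  M.IsBase V ∧ ∀ e ∈ M.E, ∃ S ⊆ V, S.ncard ≤ 2 ∧ e ∈ M.closure S

/-- `M` is a frame matroid: `M = M' \ V` for some framed matroid `(M', V)`. -/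
def FrameMatroid (M : Matroid β) : Prop :=
  ∃ (γ : Type v) (M' : Matroid (β ⊕ γ)) (V : Set (β ⊕ γ)),
    FramedMatroid M' V ∧
      deleteM M' V = M.map Sum.inl Sum.inl_injective.injOn

/-- `M` is `3`-connected: it has no `k`-separation for `k ≤ 2`. -/
def ThreeConnected (M : Matroid β) : Prop :=
  ∀ X ⊆ M.E, ∀ k : ℕ, k ≤ 2 → (k : ℕ∞) ≤ X.encard → (k : ℕ∞) ≤ (M.E \ X).encard →
    rank M M.E + k ≤ rank M X + rank M (M.E \ X)

/-- `M` is representable over some field. -/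
def Representable (M : Matroid β) : Prop :=
  ∃ (F : Type v) (_ : Field F) (W : Type v) (_ : AddCommGroup W) (_ : Module F W)
    (φ : β → W), ∀ I ⊆ M.E, (M.Indep I ↔ LinearIndependent F (fun x : I => φ x))

/-- A collection `B` of cycles of `G` satisfies the theta-property if there is no
theta-subgraph of `G` with exactly two of its three cycles in `B`. -/
def ThetaProperty (G : Graph α β) (B : Set (Set β)) : Prop :=
  ∀ H : Graph α β, H.IsSubgraph G → H.IsTheta →
    ∀ C1 C2 C3, H.CycleSet C1 → H.CycleSet C2 → H.CycleSet C3 →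
      C1 ≠ C2 → C2 ≠ C3 → C1 ≠ C3 → C1 ∈ B → C2 ∈ B → C3 ∈ B

/-! ### Auxiliary matroid lemmas -/

section MatroidAux

variable {ε : Type*} {M' : Matroid ε} {z : ε} {J : Set ε}

lemma aux_exists_minimal_dep (M : Matroid ε) :
    ∀ (n : ℕ) (D : Set ε), D.Finite → D.ncard ≤ n → M.Dep D →
    ∃ C ⊆ D, M.Dep C ∧ ∀ D', D' ⊂ C → ¬ M.Dep D' := by
  intro n
  induction n with
  | zero =>
    intro D hfin hcard hD
    have : D = ∅ := by
      rw [← Set.ncard_eq_zero hfin]; omega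
    subst this
    exact absurd M.empty_indep hD.not_indep
  | succ n ih =>
    intro D hfin hcard hD
    by_cases h : ∃ D', D' ⊂ D ∧ M.Dep D'
    · obtain ⟨D', hss, hd'⟩ := h
      have hlt : D'.ncard ≤ n := by
        have := Set.ncard_lt_ncard hss hfin; omega
      obtain ⟨C, hCD, h1, h2⟩ := ih D' (hfin.subset hss.subset) hlt hd'
      exact ⟨C, hCD.trans hss.subset, h1, h2⟩
    · push_neg at h
      exact ⟨D, subset_rfl, hD, fun D' h' => h D' h'⟩

lemma aux_contractM_ground (M' : Matroid ε) (z : ε) :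
    (contractM M' {z}).E = M'.E \ {z} := rfl

lemma aux_contract_base_iff {B : Set ε} :
    (M'✶ ↾ (M'✶.E \ {z})).IsBase B ↔ M'✶.IsBasis B (M'.E \ {z}) :=
  Matroid.isBase_restrict_iff (Set.diff_subset)

lemma aux_contract_indep_iff :
    (contractM M' {z}).Indep J ↔
      J ⊆ M'.E \ {z} ∧ ∃ B, M'✶.IsBasis B (M'.E \ {z}) ∧ Disjoint J B := by
  rw [show (contractM M' {z}) = (M'✶ ↾ (M'✶.E \ {z}))✶ from rfl,
    Matroid.dual_indep_iff_exists']
  constructor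
  · rintro ⟨h1, B, hB, h2⟩
    exact ⟨h1, B, aux_contract_base_iff.1 hB, h2⟩
  · rintro ⟨h1, B, hB, h2⟩
    exact ⟨h1, B, aux_contract_base_iff.2 hB, h2⟩

/-- a basis of `E \ {z}` in the dual extends to a base only by possibly `z`. -/
lemma aux_basis_ext {B : Set ε} (hB : M'✶.IsBasis B (M'.E \ {z})) :
    ∃ Bs, M'✶.IsBase Bs ∧ B ⊆ Bs ∧ Bs ⊆ insert z B := by
  obtain ⟨Bs, hBs, hsub⟩ := hB.indep.exists_isBase_superset
  refine ⟨Bs, hBs, hsub, fun x hx => ?_⟩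
  by_contra hx'
  simp only [Set.mem_insert_iff, not_or] at hx'
  have hxB : x ∉ B := hx'.2
  have hxz : x ≠ z := hx'.1
  have hind : M'✶.Indep (insert x B) :=
    hBs.indep.subset (Set.insert_subset hx hsub)
  have hXE : insert x B ⊆ M'.E \ {z} := by
    refine Set.insert_subset ⟨hBs.subset_ground hx, hxz⟩ hB.subset
  have := hB.eq_of_subset_indep hind (Set.subset_insert _ _) hXE
  exact hxB (this ▸ Set.mem_insert x B)

/-- L3: contract-independent implies independent. -/
lemma aux_N_indep_imp (hJ : (contractM M' {z}).Indep J) : M'.Indep J := by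
  rw [aux_contract_indep_iff] at hJ
  obtain ⟨hJE, B, hB, hdisj⟩ := hJ
  obtain ⟨Bs, hBs, hsub, hsub'⟩ := aux_basis_ext hB
  have hA : M'.IsBase (M'.E \ Bs) := hBs.compl_isBase_of_dual
  refine hA.indep.subset fun x hx => ⟨(hJE hx).1, fun hxBs => ?_⟩
  rcases hsub' hxBs with h | h
  · exact (hJE hx).2 h
  · exact hdisj.ne_of_mem hx h rfl

/-- L2a -/
lemma aux_N_indep_of_insert (hJ : M'.Indep (insert z J)) (hzJ : z ∉ J) :
    (contractM M' {z}).Indep J := by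
  obtain ⟨B', hB', hsub⟩ := hJ.exists_isBase_superset
  have hzB' : z ∈ B' := hsub (Set.mem_insert _ _)
  have hJB' : J ⊆ B' := (Set.subset_insert _ _).trans hsub
  have hBd : M'✶.IsBase (M'.E \ B') := hB'.compl_isBase_dual
  rw [aux_contract_indep_iff]
  have hJE : J ⊆ M'.E \ {z} := fun x hx =>
    ⟨hB'.subset_ground (hJB' hx), fun h => hzJ (h ▸ hx)⟩
  refine ⟨hJE, M'.E \ B', ?_, ?_⟩
  · rw [Matroid.isBasis_iff]
    refine ⟨hBd.indep, fun x hx => ⟨hx.1, fun h => hx.2 (h ▸ hzB')⟩,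
      fun J₂ hJ₂ hsub₂ hJ₂E => ?_⟩
    exact hBd.eq_of_subset_indep hJ₂ hsub₂
  · exact Set.disjoint_left.2 fun x hx hx' => hx'.2 (hJB' hx)

/-- L2b -/
lemma aux_N_indep_of_loop (hz : z ∈ M'.E) (hzl : ¬ M'.Indep {z}) (hJ : M'.Indep J) (hzJ : z ∉ J) :
    (contractM M' {z}).Indep J := by
  obtain ⟨B', hB', hsub⟩ := hJ.exists_isBase_superset
  have hzB' : z ∉ B' := fun h => hzl (hB'.indep.subset (Set.singleton_subset_iff.2 h))
  have hBd : M'✶.IsBase (M'.E \ B') := hB'.compl_isBase_dual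
  rw [aux_contract_indep_iff]
  have hJE : J ⊆ M'.E \ {z} := fun x hx =>
    ⟨hB'.subset_ground (hsub hx), fun h => hzJ (h ▸ hx)⟩
  refine ⟨hJE, (M'.E \ B') \ {z}, ?_, ?_⟩
  · rw [Matroid.isBasis_iff]
    refine ⟨hBd.indep.subset Set.diff_subset, fun x hx => ⟨hx.1.1, hx.2⟩,
      fun J₂ hJ₂ hsub₂ hJ₂E => ?_⟩
    have hJ₂E' : J₂ ⊆ M'.E := fun x hx => (hJ₂E hx).1
    have hins : M'✶.Indep (insert z J₂) := by
      rw [Matroid.dual_indep_iff_exists'] at hJ₂ ⊢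
      obtain ⟨hJ₂E'', B₀, hB₀, hdisj₀⟩ := hJ₂
      have hzB₀ : z ∉ B₀ := fun h => hzl (hB₀.indep.subset (Set.singleton_subset_iff.2 h))
      refine ⟨Set.insert_subset hz hJ₂E'', B₀, hB₀, Set.disjoint_left.2 ?_⟩
      rintro x (rfl | hx) hxB₀
      · exact hzB₀ hxB₀
      · exact hdisj₀.ne_of_mem hx hxB₀ rfl
    have hBsub : M'.E \ B' ⊆ insert z J₂ := by
      intro x hx
      by_cases hxz : x = z
      · exact hxz ▸ Set.mem_insert _ _
      · exact Set.mem_insert_of_mem _ (hsub₂ ⟨hx, hxz⟩)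
    have heq := hBd.eq_of_subset_indep hins hBsub
    refine Set.Subset.antisymm hsub₂ fun x hx => ?_
    have hx' : x ∈ M'.E \ B' := heq ▸ Set.mem_insert_of_mem _ hx
    exact ⟨hx', (hJ₂E hx).2⟩
  · exact Set.disjoint_left.2 fun x hx hx' => hx'.1.2 (hsub hx)

/-- L4 -/
lemma aux_N_indep_imp_insert (hzi : M'.Indep {z}) (hJ : (contractM M' {z}).Indep J) :
    M'.Indep (insert z J) := by
  rw [aux_contract_indep_iff] at hJ
  obtain ⟨hJE, B, hB, hdisj⟩ := hJ
  have hzB : z ∉ B := fun h => (hB.subset h).2 rfl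
  have hBbase : M'✶.IsBase B := by
    obtain ⟨Bs, hBs, hsub, hsub'⟩ := aux_basis_ext hB
    by_cases hzBs : z ∈ Bs
    · exfalso
      have hBseq : Bs = insert z B := by
        apply Set.Subset.antisymm hsub'
        exact Set.insert_subset hzBs hsub
      obtain ⟨B₀', hB₀', hzB₀'⟩ := hzi.exists_isBase_superset
      have hB₂ : M'✶.IsBase (M'.E \ B₀') := hB₀'.compl_isBase_dual
      have hzB₂ : z ∉ M'.E \ B₀' := fun h => h.2 (hzB₀' rfl)
      obtain ⟨y, hy, hybase⟩ := hBs.exchange hB₂ ⟨hzBs, hzB₂⟩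
      have hBsz : Bs \ {z} = B := by
        rw [hBseq, Set.insert_diff_self_of_notMem hzB]
      rw [hBsz] at hybase
      have hyE : insert y B ⊆ M'.E \ {z} := by
        refine Set.insert_subset ⟨hy.1.1, fun h => hzB₂ (h ▸ hy.1)⟩ hB.subset
      have := hB.eq_of_subset_indep hybase.indep (Set.subset_insert _ _) hyE
      exact hy.2 (hsub (this ▸ Set.mem_insert y B))
    · have : Bs ⊆ B := fun x hx => by
        rcases hsub' hx with h | h
        · exact absurd (h ▸ hx) hzBs
        · exact h
      exact (Set.Subset.antisymm this hsub) ▸ hBs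
  have hA : M'.IsBase (M'.E \ B) := hBbase.compl_isBase_of_dual
  refine hA.indep.subset (Set.insert_subset ⟨hzi.subset_ground rfl, hzB⟩ ?_)
  exact fun x hx => ⟨(hJE hx).1, fun h => hdisj.ne_of_mem hx h rfl⟩

end MatroidAux
section Transfer

variable {β : Type v} {M : Matroid β} {M' : Matroid (Option β)}

lemma aux_ground_eq
    (hdel : deleteM M' {none} = M.map some (Option.some_injective β).injOn) :
    M'.E \ {none} = some '' M.E := by
  have := congrArg Matroid.E hdel
  simpa [deleteM] using this

lemma aux_indep_up
    (hdel : deleteM M' {none} = M.map some (Option.some_injective β).injOn)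
    {I : Set β} (hI : M.Indep I) :
    M'.Indep (some '' I) ∧ some '' I ⊆ M'.E \ {none} := by
  have h : (deleteM M' {none}).Indep (some '' I) := by
    rw [hdel]; exact hI.map some _
  rw [deleteM, Matroid.restrict_indep_iff] at h
  exact h

lemma aux_indep_down
    (hdel : deleteM M' {none} = M.map some (Option.some_injective β).injOn)
    {I : Set β} (hIE : I ⊆ M.E) (hI : M'.Indep (some '' I)) : M.Indep I := by
  have hsub : some '' I ⊆ M'.E \ {none} := by
    rw [aux_ground_eq hdel]; exact Set.image_mono hIE
  have h : (deleteM M' {none}).Indep (some '' I) := by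
    rw [deleteM, Matroid.restrict_indep_iff]; exact ⟨hI, hsub⟩
  rw [hdel, Matroid.map_indep_iff] at h
  obtain ⟨I₀, hI₀, heq⟩ := h
  rwa [(Set.image_injective.2 (Option.some_injective β)).eq_iff.1 heq]

lemma aux_dep_up'
    (hdel : deleteM M' {none} = M.map some (Option.some_injective β).injOn)
    {D : Set β} (hD : M.Dep D) : M'.Dep (some '' D) := by
  rw [Matroid.dep_iff]
  refine ⟨fun hind => hD.not_indep (aux_indep_down hdel hD.subset_ground hind), ?_⟩
  refine (Set.image_mono hD.subset_ground).trans ?_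
  rw [← aux_ground_eq hdel]; exact Set.diff_subset

/-- The key lemma: a circuit of the contraction through `f`. -/
lemma aux_key (hz : (none : Option β) ∈ M'.E)
    (hdel : deleteM M' {none} = M.map some (Option.some_injective β).injOn)
    (hfin : M'.E.Finite) {X : Set β} {f : β} (hX : X ⊆ M.E) (hf : f ∈ M.E) (hfX : f ∉ X)
    (hfcl : f ∈ M.closure X) :
    ∃ C₀, IsCircuit (contractM M' {none}) C₀ ∧ some f ∈ C₀ ∧
      C₀ ⊆ insert (some f) (some '' X) := by
  classical
  obtain ⟨I, hI⟩ := M.exists_isBasis X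
  have hfI : f ∉ I := fun h => hfX (hI.subset h)
  have hfclI : f ∈ M.closure I := by rw [hI.closure_eq_closure]; exact hfcl
  have hdep : M.Dep (insert f I) := hI.indep.insert_dep_iff.2 ⟨hfclI, hfI⟩
  set f' : Option β := some f with hf'def
  set I' : Set (Option β) := some '' I with hI'def
  have hI'ind : M'.Indep I' := (aux_indep_up hdel hI.indep).1
  have hI'E : I' ⊆ M'.E \ {none} := (aux_indep_up hdel hI.indep).2
  have hdep' : M'.Dep (insert f' I') := by
    have := aux_dep_up' hdel hdep
    rwa [Set.image_insert_eq] at this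
  have hf'E' : f' ∈ M'.E \ {none} := by
    rw [aux_ground_eq hdel]; exact ⟨f, hf, rfl⟩
  have hf'I' : f' ∉ I' := by
    rintro ⟨g, hg, hgeq⟩
    exact hfI ((Option.some_injective β hgeq) ▸ hg)
  have hfcl' : f' ∈ M'.closure I' := (hI'ind.insert_dep_iff.1 hdep').1
  -- find I₁ ⊆ I' with N.Indep I₁ and N.Dep (insert f' I₁)
  have hmain : ∃ I₁ ⊆ I', (contractM M' {none}).Indep I₁ ∧
      (contractM M' {none}).Dep (insert f' I₁) := by
    by_cases hzi : M'.Indep {none}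
    · obtain ⟨B₁, hB₁, hzB₁⟩ := hzi.subset_isBasis_of_subset
        (Set.singleton_subset_iff.2 (Set.mem_insert _ _))
        (Set.insert_subset hz fun x hx => (hI'E hx).1)
      have hzB₁' : none ∈ B₁ := hzB₁ rfl
      have hI₁I' : B₁ \ {none} ⊆ I' := by
        intro x hx
        rcases hB₁.subset hx.1 with h | h
        · exact absurd h hx.2
        · exact h
      refine ⟨B₁ \ {none}, hI₁I', ?_, ?_⟩
      · refine aux_N_indep_of_insert ?_ (fun h => h.2 rfl)
        rw [Set.insert_diff_singleton, Set.insert_eq_self.2 hzB₁']; exact hB₁.indep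
      · rw [Matroid.dep_iff]
        constructor
        · intro hind
          have hins := aux_N_indep_imp_insert hzi hind
          rw [Set.insert_comm, Set.insert_diff_singleton,
            Set.insert_eq_self.2 hzB₁'] at hins
          have hf'B₁ : f' ∉ B₁ := by
            intro h
            rcases hB₁.subset h with h' | h'
            · exact (hf'E'.2) h'
            · exact hf'I' h'
          have := (hB₁.indep.insert_indep_iff_of_notMem hf'B₁).1 hins
          refine this.2 ?_
          rw [hB₁.closure_eq_closure]
          exact M'.closure_subset_closure (Set.subset_insert _ _) hfcl'
        · rw [aux_contractM_ground]
          exact Set.insert_subset hf'E' fun x hx => ⟨(hI'E (hI₁I' hx)).1, hx.2⟩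
    · refine ⟨I', subset_rfl, aux_N_indep_of_loop hz hzi hI'ind (fun h => (hI'E h).2 rfl), ?_⟩
      rw [Matroid.dep_iff]
      refine ⟨fun hind => hdep'.not_indep (aux_N_indep_imp hind), ?_⟩
      rw [aux_contractM_ground]
      exact Set.insert_subset hf'E' hI'E
  obtain ⟨I₁, hI₁I', hNI₁, hNdep⟩ := hmain
  obtain ⟨C₀, hC₀sub, hC₀dep, hmin⟩ := aux_exists_minimal_dep (contractM M' {none})
    (insert f' I₁).ncard _ (Set.Finite.subset hfin
      (hNdep.subset_ground.trans (by rw [aux_contractM_ground]; exact Set.diff_subset)))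
    le_rfl hNdep
  have hf'C₀ : f' ∈ C₀ := by
    by_contra h
    have : C₀ ⊆ I₁ := fun x hx => (hC₀sub hx).resolve_left (fun heq => h (heq ▸ hx))
    exact hC₀dep.not_indep (hNI₁.subset this)
  refine ⟨C₀, ⟨hC₀dep, fun D hD => ?_⟩, hf'C₀, ?_⟩
  · by_contra hni
    refine hmin D hD (Matroid.dep_iff.2 ⟨hni, hD.subset.trans hC₀dep.subset_ground⟩)
  · refine hC₀sub.trans (Set.insert_subset_insert ?_)
    exact hI₁I'.trans (Set.image_mono hI.subset)

/-- The J-construction: an almost-as-large independent set in the contraction. -/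
lemma aux_J (hz : (none : Option β) ∈ M'.E)
    (hdel : deleteM M' {none} = M.map some (Option.some_injective β).injOn)
    {I : Set β} (hI : M.Indep I) :
    ∃ J ⊆ some '' I, (contractM M' {none}).Indep J ∧
      (some '' I).encard ≤ J.encard + 1 := by
  have hI'ind : M'.Indep (some '' I) := (aux_indep_up hdel hI).1
  have hI'E : some '' I ⊆ M'.E \ {none} := (aux_indep_up hdel hI).2
  by_cases hzi : M'.Indep {none}
  · obtain ⟨B₁, hB₁, hzB₁⟩ := hzi.subset_isBasis_of_subset
      (Set.singleton_subset_iff.2 (Set.mem_insert _ _))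
      (Set.insert_subset hz fun x hx => (hI'E hx).1)
    have hzB₁' : none ∈ B₁ := hzB₁ rfl
    have hI₁I' : B₁ \ {none} ⊆ some '' I := by
      intro x hx
      rcases hB₁.subset hx.1 with h | h
      · exact absurd h hx.2
      · exact h
    refine ⟨B₁ \ {none}, hI₁I', ?_, ?_⟩
    · refine aux_N_indep_of_insert ?_ (fun h => h.2 rfl)
      rw [Set.insert_diff_singleton, Set.insert_eq_self.2 hzB₁']; exact hB₁.indep
    · obtain ⟨B₂, hB₂, hIB₂⟩ := hI'ind.subset_isBasis_of_subset
        (Set.subset_insert none (some '' I))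
        (Set.insert_subset hz fun x hx => (hI'E hx).1)
      have hcard : B₁.encard = B₂.encard :=
        (hB₁.restrict_isBase).encard_eq_encard_of_isBase (hB₂.restrict_isBase)
      have h1 : (some '' I).encard ≤ B₂.encard := Set.encard_mono hIB₂
      have h2 : (B₁ \ {none}).encard + 1 = B₁.encard :=
        Set.encard_diff_singleton_add_one hzB₁'
      rw [← h2] at hcard
      exact h1.trans (le_of_eq hcard.symm)
  · exact ⟨some '' I, subset_rfl,
      aux_N_indep_of_loop hz hzi hI'ind (fun h => (hI'E h).2 rfl), le_self_add⟩

end Transfer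
section GraphAux

variable {γ : Type u} {δ : Type v}

lemma aux_zmod_ne_zero {n k : ℕ} (hk : 0 < k) (hk' : k < n) : ((k : ℕ) : ZMod n) ≠ 0 := by
  intro h
  rw [ZMod.natCast_eq_zero_iff] at h
  exact absurd (Nat.le_of_dvd hk h) (by omega)

lemma aux_sym2_exists (z : Sym2 γ) : ∃ x y, z = s(x, y) := by
  induction z using Sym2.ind with
  | _ a b => exact ⟨a, b, rfl⟩

lemma aux_mem_diag {v a : γ} (h : v ∈ Sym2.diag a) : v = a := by
  rw [show Sym2.diag a = s(a, a) from rfl, Sym2.mem_iff, or_self] at h; exact h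

lemma aux_self_mem_diag (a : γ) : a ∈ Sym2.diag a := by
  rw [show Sym2.diag a = s(a, a) from rfl]; exact Sym2.mem_mk_left a a

lemma aux_restrict_E (Γ : Graph γ δ) {C : Set δ} (hC : C ⊆ Γ.E) :
    (Γ.restrictEdges C).E = C := by
  show C ∩ Γ.E = C
  exact Set.inter_eq_self_of_subset_left hC

lemma aux_restrict_V (Γ : Graph γ δ) {C : Set δ} (hC : C ⊆ Γ.E) :
    (Γ.restrictEdges C).V = {v | ∃ e ∈ C, v ∈ Γ.ends e} := by
  show {v | ∃ e ∈ C ∩ Γ.E, v ∈ Γ.ends e} = _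
  rw [Set.inter_eq_self_of_subset_left hC]

lemma aux_cycle_loop (Γ : Graph γ δ) {e : δ} (he : e ∈ Γ.E) (hd : (Γ.ends e).IsDiag) :
    Γ.CycleSet {e} := by
  classical
  obtain ⟨a, ha⟩ : ∃ a, Sym2.diag a = Γ.ends e := ⟨_, Sym2.diag_diagElem hd⟩
  have hsub : {e} ⊆ Γ.E := Set.singleton_subset_iff.2 he
  have hE : (Γ.restrictEdges {e}).E = {e} := aux_restrict_E Γ hsub
  have hV : (Γ.restrictEdges {e}).V = {a} := by
    rw [aux_restrict_V Γ hsub]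
    ext v
    simp only [Set.mem_setOf_eq, Set.mem_singleton_iff]
    constructor
    · rintro ⟨d, rfl, hv⟩
      rw [← ha] at hv
      exact aux_mem_diag hv
    · rintro rfl
      exact ⟨e, rfl, by rw [← ha]; exact aux_self_mem_diag _⟩
  refine ⟨hsub, ⟨e, by rw [hE]; rfl⟩, ?_, ?_⟩
  · intro u hu v hv
    rw [hV] at hu hv
    rw [Set.mem_singleton_iff] at hu hv
    rw [hu, hv]
  · intro v hv
    rw [hV, Set.mem_singleton_iff] at hv
    subst hv
    show ({d ∈ (Γ.restrictEdges {e}).E | v ∈ Γ.ends d ∧ ¬ (Γ.ends d).IsDiag}).ncard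
      + 2 * ({d ∈ (Γ.restrictEdges {e}).E | Γ.ends d = Sym2.diag v}).ncard = 2
    rw [hE]
    have h1 : {d ∈ ({e} : Set δ) | v ∈ Γ.ends d ∧ ¬ (Γ.ends d).IsDiag} = ∅ := by
      ext d
      simp only [Set.mem_setOf_eq, Set.mem_singleton_iff, Set.mem_empty_iff_false, iff_false,
        not_and]
      rintro rfl hv
      exact fun h => h hd
    have h2 : {d ∈ ({e} : Set δ) | Γ.ends d = Sym2.diag v} = {e} := by
      ext d
      simp only [Set.mem_setOf_eq, Set.mem_singleton_iff]
      constructor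
      · rintro ⟨rfl, -⟩; rfl
      · rintro rfl; exact ⟨rfl, ha.symm⟩
    rw [h1, h2, Set.ncard_empty, Set.ncard_singleton]

lemma aux_cycle_parallel (Γ : Graph γ δ) {e f : δ} (he : e ∈ Γ.E) (hf : f ∈ Γ.E)
    (hef : e ≠ f) (hends : Γ.ends e = Γ.ends f) (hd : ¬ (Γ.ends e).IsDiag) :
    Γ.CycleSet {e, f} := by
  classical
  obtain ⟨a, b, hab⟩ := aux_sym2_exists (Γ.ends e)
  rw [hab, Sym2.mk_isDiag_iff] at hd
  have hsub : {e, f} ⊆ Γ.E := by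
    rintro d (rfl | rfl) <;> assumption
  have hE : (Γ.restrictEdges {e, f}).E = {e, f} := aux_restrict_E Γ hsub
  have hV : (Γ.restrictEdges {e, f}).V = {a, b} := by
    rw [aux_restrict_V Γ hsub]
    ext v
    simp only [Set.mem_setOf_eq, Set.mem_insert_iff, Set.mem_singleton_iff]
    constructor
    · rintro ⟨d, (rfl | rfl), hv⟩
      · rw [hab, Sym2.mem_iff] at hv; exact hv
      · rw [← hends, hab, Sym2.mem_iff] at hv; exact hv
    · rintro (rfl | rfl)
      · exact ⟨e, Or.inl rfl, by rw [hab]; exact Sym2.mem_mk_left _ _⟩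
      · exact ⟨e, Or.inl rfl, by rw [hab]; exact Sym2.mem_mk_right _ _⟩
  have hadj : (Γ.restrictEdges {e, f}).Adj a b :=
    ⟨e, by rw [hE]; exact Or.inl rfl, hab⟩
  have hadj' : (Γ.restrictEdges {e, f}).Adj b a :=
    ⟨e, by rw [hE]; exact Or.inl rfl, by show Γ.ends e = s(b, a); rw [hab, Sym2.eq_swap]⟩
  refine ⟨hsub, ⟨e, by rw [hE]; exact Or.inl rfl⟩, ?_, ?_⟩
  · intro u hu v hv
    rw [hV] at hu hv
    rcases hu with rfl | rfl <;> rcases hv with rfl | rfl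
    · exact Relation.ReflTransGen.refl
    · exact Relation.ReflTransGen.single hadj
    · exact Relation.ReflTransGen.single hadj'
    · exact Relation.ReflTransGen.refl
  · intro v hv
    rw [hV] at hv
    have hvmem : v ∈ Γ.ends e := by
      rw [hab]
      rcases hv with rfl | rfl
      · exact Sym2.mem_mk_left _ _
      · exact Sym2.mem_mk_right _ _
    show ({d ∈ (Γ.restrictEdges {e, f}).E | v ∈ Γ.ends d ∧ ¬ (Γ.ends d).IsDiag}).ncard
      + 2 * ({d ∈ (Γ.restrictEdges {e, f}).E | Γ.ends d = Sym2.diag v}).ncard = 2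
    rw [hE]
    have hnd : ¬ (Γ.ends e).IsDiag := by rw [hab, Sym2.mk_isDiag_iff]; exact hd
    have h1 : {d ∈ ({e, f} : Set δ) | v ∈ Γ.ends d ∧ ¬ (Γ.ends d).IsDiag} = {e, f} := by
      ext d
      simp only [Set.mem_setOf_eq, Set.mem_insert_iff, Set.mem_singleton_iff]
      constructor
      · rintro ⟨h, -⟩; exact h
      · rintro (rfl | rfl)
        · exact ⟨Or.inl rfl, hvmem, hnd⟩
        · exact ⟨Or.inr rfl, by rwa [← hends], by rwa [← hends]⟩
    have h2 : {d ∈ ({e, f} : Set δ) | Γ.ends d = Sym2.diag v} = ∅ := by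
      ext d
      simp only [Set.mem_setOf_eq, Set.mem_insert_iff, Set.mem_singleton_iff,
        Set.mem_empty_iff_false, iff_false, not_and]
      rintro (rfl | rfl) hdg
      · exact hnd (hdg ▸ Sym2.diag_isDiag v)
      · rw [← hends] at hdg
        exact hnd (hdg ▸ Sym2.diag_isDiag v)
    rw [h1, h2, Set.ncard_empty, Set.ncard_pair hef]

end GraphAux
section GraphPoly

variable {γ : Type u} {δ : Type v}

lemma aux_cycle_poly (Γ : Graph γ δ) (n : ℕ) (hn : 3 ≤ n)
    (vv : ZMod n → γ) (ee : ZMod n → δ) (hv : Function.Injective vv)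
    (heE : ∀ i, ee i ∈ Γ.E)
    (hends : ∀ i, Γ.ends (ee i) = s(vv i, vv (i + 1))) :
    Γ.CycleSet (Set.range ee) := by
  classical
  haveI : NeZero n := ⟨by omega⟩
  have h10 : (1 : ZMod n) ≠ 0 := by
    have := aux_zmod_ne_zero (n := n) (k := 1) one_pos (by omega)
    simpa using this
  have h20 : (2 : ZMod n) ≠ 0 := by
    have := aux_zmod_ne_zero (n := n) (k := 2) two_pos (by omega)
    simpa using this
  have hne1 : ∀ i : ZMod n, i ≠ i + 1 := fun i h => h10 (left_eq_add.1 h)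
  have hnesub : ∀ i : ZMod n, i - 1 ≠ i := fun i h => h10 (by
    have := sub_eq_self.1 h; exact this)
  have hpair : ∀ i j : ZMod n, s(vv i, vv (i + 1)) = s(vv j, vv (j + 1)) → i = j := by
    intro i j h
    rw [Sym2.eq_iff] at h
    rcases h with ⟨h1, -⟩ | ⟨h1, h2⟩
    · exact hv h1
    · exfalso
      have hij : i = j + 1 := hv h1
      have hji : j = i + 1 := (hv h2).symm
      rw [hij] at hji
      have : j = j + 2 := hji.trans (by ring)
      exact h20 (left_eq_add.1 this)
  have he_inj : Function.Injective ee := fun i j h =>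
    hpair i j (by rw [← hends, ← hends, h])
  have hCE : Set.range ee ⊆ Γ.E := by rintro _ ⟨i, rfl⟩; exact heE i
  have hE : (Γ.restrictEdges (Set.range ee)).E = Set.range ee := aux_restrict_E Γ hCE
  have hV : (Γ.restrictEdges (Set.range ee)).V = Set.range vv := by
    rw [aux_restrict_V Γ hCE]
    ext x
    simp only [Set.mem_setOf_eq, Set.mem_range]
    constructor
    · rintro ⟨d, ⟨i, rfl⟩, hx⟩
      rw [hends i, Sym2.mem_iff] at hx
      rcases hx with h | h
      · exact ⟨i, h.symm⟩
      · exact ⟨i + 1, h.symm⟩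
    · rintro ⟨i, rfl⟩
      exact ⟨ee i, ⟨i, rfl⟩, by rw [hends i]; exact Sym2.mem_mk_left _ _⟩
  have hadj : ∀ i : ZMod n, (Γ.restrictEdges (Set.range ee)).Adj (vv i) (vv (i + 1)) :=
    fun i => ⟨ee i, by rw [hE]; exact ⟨i, rfl⟩, hends i⟩
  have hreach : ∀ (i : ZMod n) (k : ℕ),
      Relation.ReflTransGen (Γ.restrictEdges (Set.range ee)).Adj (vv i) (vv (i + k)) := by
    intro i k
    induction k with
    | zero => simpa using Relation.ReflTransGen.refl
    | succ k ih =>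
      refine Relation.ReflTransGen.tail ih ?_
      have : (i + ((k : ℕ) + 1 : ℕ) : ZMod n) = (i + k) + 1 := by push_cast; ring
      rw [this]
      exact hadj _
  refine ⟨hCE, ⟨ee 0, by rw [hE]; exact ⟨0, rfl⟩⟩, ?_, ?_⟩
  · intro x hx y hy
    rw [hV] at hx hy
    obtain ⟨i, rfl⟩ := hx
    obtain ⟨j, rfl⟩ := hy
    obtain ⟨k, hk⟩ : ∃ k : ℕ, (k : ZMod n) = j - i := ⟨(j - i).val, ZMod.natCast_rightInverse _⟩
    have : (i + k : ZMod n) = j := by rw [hk]; ring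
    have := hreach i k
    rwa [‹(i + k : ZMod n) = j›] at this
  · intro x hx
    rw [hV] at hx
    obtain ⟨i, rfl⟩ := hx
    show ({d ∈ (Γ.restrictEdges (Set.range ee)).E | vv i ∈ Γ.ends d ∧ ¬ (Γ.ends d).IsDiag}).ncard
      + 2 * ({d ∈ (Γ.restrictEdges (Set.range ee)).E | Γ.ends d = Sym2.diag (vv i)}).ncard = 2
    rw [hE]
    have hnd : ∀ j : ZMod n, ¬ (Γ.ends (ee j)).IsDiag := by
      intro j h
      rw [hends j, Sym2.mk_isDiag_iff] at h
      exact hne1 j (hv h)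
    have h1 : {d ∈ Set.range ee | vv i ∈ Γ.ends d ∧ ¬ (Γ.ends d).IsDiag}
        = {ee (i - 1), ee i} := by
      ext d
      simp only [Set.mem_setOf_eq, Set.mem_insert_iff, Set.mem_singleton_iff]
      constructor
      · rintro ⟨⟨j, rfl⟩, hmem, -⟩
        rw [hends j, Sym2.mem_iff] at hmem
        rcases hmem with h | h
        · exact Or.inr (congrArg ee (hv h).symm)
        · refine Or.inl (congrArg ee ?_)
          have : i = j + 1 := hv h
          rw [this]; ring
      · rintro (rfl | rfl)
        · refine ⟨⟨i - 1, rfl⟩, ?_, hnd _⟩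
          rw [hends (i - 1), show i - 1 + 1 = i by ring]
          exact Sym2.mem_mk_right _ _
        · exact ⟨⟨i, rfl⟩, by rw [hends i]; exact Sym2.mem_mk_left _ _, hnd _⟩
    have h2 : {d ∈ Set.range ee | Γ.ends d = Sym2.diag (vv i)} = ∅ := by
      ext d
      simp only [Set.mem_setOf_eq, Set.mem_empty_iff_false, iff_false, not_and]
      rintro ⟨j, rfl⟩ h
      exact hnd j (h ▸ Sym2.diag_isDiag (vv i))
    rw [h1, h2, Set.ncard_empty, Set.ncard_pair (fun h => hnesub i (he_inj h))]

end GraphPoly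
section BigGraph

variable {γ : Type u} {δ : Type v}

lemma aux_list_len_le {W : Set γ} (hW : W.Finite) {l : List γ}
    (hnd : l.Nodup) (hmem : ∀ x ∈ l, x ∈ W) : l.length ≤ W.ncard := by
  classical
  have h1 : l.toFinset.card = l.length := List.toFinset_card_of_nodup hnd
  have h2 : (l.toFinset : Set γ) ⊆ W := by
    intro x hx
    rw [Finset.mem_coe, List.mem_toFinset] at hx
    exact hmem x hx
  have := Set.ncard_le_ncard h2 hW
  rwa [Set.ncard_coe_finset, h1] at this

lemma aux_exists_cycle (Γ : Graph γ δ) :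
    ∀ (n : ℕ) (W : Set γ) (J : Set δ), W.ncard = n → J ⊆ Γ.E →
      (∀ e ∈ J, ∀ x, x ∈ Γ.ends e → x ∈ W) → W.Finite → W.Nonempty →
      W.ncard ≤ J.ncard → ∃ C, C ⊆ J ∧ Γ.CycleSet C := by
  classical
  intro n
  induction n using Nat.strong_induction_on with
  | _ n ih =>
  intro W J hWn hJE hWend hWfin hWne hcard
  have hJfin : J.Finite := Γ.finE.subset hJE
  by_cases h1 : ∃ e ∈ J, (Γ.ends e).IsDiag
  · obtain ⟨e, heJ, hd⟩ := h1
    exact ⟨{e}, Set.singleton_subset_iff.2 heJ, aux_cycle_loop Γ (hJE heJ) hd⟩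
  push_neg at h1
  by_cases h2 : ∃ e ∈ J, ∃ f ∈ J, e ≠ f ∧ Γ.ends e = Γ.ends f
  · obtain ⟨e, he, f, hf, hef, hee⟩ := h2
    refine ⟨{e, f}, ?_, aux_cycle_parallel Γ (hJE he) (hJE hf) hef hee (h1 e he)⟩
    rintro d (rfl | rfl) <;> assumption
  push_neg at h2
  -- W has at least 2 elements
  have hJne : J.Nonempty := by
    rcases J.eq_empty_or_nonempty with rfl | h
    · rw [Set.ncard_empty] at hcard
      have := (Set.ncard_pos hWfin).2 hWne
      omega
    · exact h
  have hW2 : 1 < W.ncard := by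
    obtain ⟨e₀, he₀⟩ := hJne
    obtain ⟨a, b, hab⟩ := aux_sym2_exists (Γ.ends e₀)
    have hane : a ≠ b := by
      intro h
      exact h1 e₀ he₀ (by rw [hab, Sym2.mk_isDiag_iff]; exact h)
    rw [Set.one_lt_ncard_iff hWfin]
    exact ⟨a, b, hWend e₀ he₀ a (by rw [hab]; exact Sym2.mem_mk_left _ _),
      hWend e₀ he₀ b (by rw [hab]; exact Sym2.mem_mk_right _ _), hane⟩
  by_cases h3 : ∃ w ∈ W, ({e ∈ J | w ∈ Γ.ends e}).ncard ≤ 1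
  · obtain ⟨w, hwW, hdeg⟩ := h3
    have hsplit : J ⊆ {e ∈ J | w ∉ Γ.ends e} ∪ {e ∈ J | w ∈ Γ.ends e} := by
      intro e he
      by_cases hw : w ∈ Γ.ends e
      · exact Or.inr ⟨he, hw⟩
      · exact Or.inl ⟨he, hw⟩
    have hJ'card : J.ncard ≤ {e ∈ J | w ∉ Γ.ends e}.ncard + 1 := by
      have hle := Set.ncard_le_ncard hsplit
        ((hJfin.subset (Set.sep_subset _ _)).union (hJfin.subset (Set.sep_subset _ _)))
      have := Set.ncard_union_le {e ∈ J | w ∉ Γ.ends e} {e ∈ J | w ∈ Γ.ends e}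
      omega
    have hW'card : (W \ {w}).ncard = n - 1 := by
      rw [Set.ncard_diff_singleton_of_mem hwW, hWn]
    obtain ⟨C, hCsub, hCcyc⟩ := ih (n - 1) (by omega) (W \ {w}) {e ∈ J | w ∉ Γ.ends e}
      hW'card ((Set.sep_subset _ _).trans hJE)
      (by
        rintro e ⟨heJ, hwe⟩ x hx
        exact ⟨hWend e heJ x hx, fun h => hwe ((Set.mem_singleton_iff.1 h) ▸ hx)⟩)
      (hWfin.diff)
      (by
        rw [← Set.ncard_pos (hWfin.diff), hW'card]
        omega)
      (by rw [hW'card]; omega)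
    exact ⟨C, hCsub.trans (Set.sep_subset _ _), hCcyc⟩
  push_neg at h3
  -- minimum degree at least 2 : extract a cycle via a maximal path
  set Adj' : γ → γ → Prop := fun x y => ∃ e ∈ J, Γ.ends e = s(x, y) with hAdj'def
  set P : Set (List γ) :=
    {l | l ≠ [] ∧ l.Nodup ∧ (∀ x ∈ l, x ∈ W) ∧ l.IsChain Adj'} with hPdef
  obtain ⟨w₀, hw₀⟩ := hWne
  have hP0 : [w₀] ∈ P := ⟨List.cons_ne_nil _ _, List.nodup_singleton _,
    by intro x hx; rw [List.mem_singleton] at hx; exact hx ▸ hw₀, List.isChain_singleton _⟩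
  have hSne : (List.length '' P).Nonempty := ⟨1, [w₀], hP0, rfl⟩
  have hSbdd : BddAbove (List.length '' P) := by
    refine ⟨W.ncard, ?_⟩
    rintro _ ⟨l, hl, rfl⟩
    exact aux_list_len_le hWfin hl.2.1 hl.2.2.1
  obtain ⟨l, hlP, hlen⟩ := Nat.sSup_mem hSne hSbdd
  obtain ⟨hlne, hlnd, hlW, hlch⟩ := hlP
  set m := l.length with hmdef
  set b := l.getLast hlne with hbdef
  have hbW : b ∈ W := hlW _ (List.getLast_mem hlne)
  have hdegb := h3 b hbW
  rw [Set.one_lt_ncard_iff (hJfin.subset (Set.sep_subset _ _))] at hdegb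
  obtain ⟨e1, e2, he1, he2, he12⟩ := hdegb
  have hb1 : b ∈ Γ.ends e1 := he1.2
  have hb2 : b ∈ Γ.ends e2 := he2.2
  set c1 := Sym2.Mem.other hb1 with hc1def
  set c2 := Sym2.Mem.other hb2 with hc2def
  have hc1 : Γ.ends e1 = s(b, c1) := (Sym2.other_spec hb1).symm
  have hc2 : Γ.ends e2 = s(b, c2) := (Sym2.other_spec hb2).symm
  have hc1b : c1 ≠ b := Sym2.other_ne (h1 e1 he1.1) hb1
  have hc2b : c2 ≠ b := Sym2.other_ne (h1 e2 he2.1) hb2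
  have hc1W : c1 ∈ W := hWend e1 he1.1 c1 (Sym2.other_mem hb1)
  have hc2W : c2 ∈ W := hWend e2 he2.1 c2 (Sym2.other_mem hb2)
  have hc12 : c1 ≠ c2 := by
    intro h
    exact h2 e1 he1.1 e2 he2.1 he12 (by rw [hc1, hc2, h])
  have hext : ∀ (c : γ) (e : δ), e ∈ J → Γ.ends e = s(b, c) → c ∈ W → c ∈ l := by
    intro c e heJ hec hcW
    by_contra hcl
    have hl' : l ++ [c] ∈ P := by
      refine ⟨by simp, ?_, ?_, ?_⟩
      · refine List.Nodup.append hlnd (List.nodup_singleton _) ?_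
        intro x hx hx'
        rw [List.mem_singleton] at hx'
        exact hcl (hx' ▸ hx)
      · intro x hx
        rw [List.mem_append, List.mem_singleton] at hx
        rcases hx with hx | rfl
        · exact hlW x hx
        · exact hcW
      · rw [List.isChain_append]
        refine ⟨hlch, List.isChain_singleton _, ?_⟩
        intro x hx y hy
        rw [List.getLast?_eq_getLast hlne, Option.mem_some_iff] at hx
        simp only [List.head?_cons, Option.mem_some_iff] at hy
        rw [← hx, ← hy]
        exact ⟨e, heJ, hec⟩
    have hmem : (l ++ [c]).length ∈ List.length '' P := ⟨_, hl', rfl⟩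
    have := le_csSup hSbdd hmem
    rw [← hlen, List.length_append, List.length_singleton] at this
    omega
  have hc1l : c1 ∈ l := hext c1 e1 he1.1 hc1 hc1W
  have hc2l : c2 ∈ l := hext c2 e2 he2.1 hc2 hc2W
  obtain ⟨i1, hi1⟩ := List.get_of_mem hc1l
  obtain ⟨i2, hi2⟩ := List.get_of_mem hc2l
  have hmpos : 0 < m := List.length_pos_iff.2 hlne
  have hbget : l.get ⟨m - 1, by omega⟩ = b := (List.getLast_eq_getElem hlne).symm
  have hi1ne : (i1 : ℕ) ≠ m - 1 := by
    intro h
    apply hc1b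
    rw [← hi1, ← hbget]
    congr 1
    exact Fin.ext h
  have hi2ne : (i2 : ℕ) ≠ m - 1 := by
    intro h
    apply hc2b
    rw [← hi2, ← hbget]
    congr 1
    exact Fin.ext h
  have hi12 : (i1 : ℕ) ≠ (i2 : ℕ) := by
    intro h
    apply hc12
    rw [← hi1, ← hi2]
    congr 1
    exact Fin.ext h
  -- choose the smaller index
  obtain ⟨i, c, estar, hic, hstarJ, hstar, him3⟩ :
      ∃ (i : ℕ) (c : γ) (estar : δ), (∃ h : i < m, l.get ⟨i, h⟩ = c) ∧ estar ∈ J ∧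
        Γ.ends estar = s(b, c) ∧ i + 3 ≤ m := by
    rcases lt_or_gt_of_ne hi12 with h | h
    · exact ⟨i1, c1, e1, ⟨i1.2, hi1⟩, he1.1, hc1, by have := i1.2; have := i2.2; omega⟩
    · exact ⟨i2, c2, e2, ⟨i2.2, hi2⟩, he2.1, hc2, by have := i1.2; have := i2.2; omega⟩
  obtain ⟨him, hgetc⟩ := hic
  set n' := m - i with hn'def
  have hn'3 : 3 ≤ n' := by omega
  haveI : NeZero n' := ⟨by omega⟩
  haveI : Fact (1 < n') := ⟨by omega⟩
  set vv : ZMod n' → γ := fun x => l.get ⟨i + x.val, by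
    have := ZMod.val_lt x; omega⟩ with hvvdef
  have hvv_inj : Function.Injective vv := by
    intro x y h
    have hij := (List.Nodup.get_inj_iff hlnd).1 h
    have hval : i + x.val = i + y.val := congrArg Fin.val hij
    exact ZMod.val_injective _ (by omega)
  have hchain := List.isChain_iff_getElem.1 hlch
  have hAdjs : ∀ x : ZMod n', ∃ e ∈ J, Γ.ends e = s(vv x, vv (x + 1)) := by
    intro x
    have hxval : x.val < n' := ZMod.val_lt x
    have hx1val : (x + 1).val = (x.val + 1) % n' := by
      rw [ZMod.val_add, ZMod.val_one]
    by_cases hlast : x.val = n' - 1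
    · have h0 : (x + 1).val = 0 := by
        rw [hx1val, hlast, show n' - 1 + 1 = n' by omega, Nat.mod_self]
      have hvx : vv x = b := by
        show l.get _ = b
        rw [← hbget]
        congr 1
        exact Fin.ext (by show i + x.val = m - 1; omega)
      have hvx1 : vv (x + 1) = c := by
        show l.get _ = c
        rw [← hgetc]
        congr 1
        exact Fin.ext (by show i + (x + 1).val = i; omega)
      rw [hvx, hvx1]
      exact ⟨estar, hstarJ, by rw [hstar]⟩
    · have h0 : (x + 1).val = x.val + 1 := by
        rw [hx1val, Nat.mod_eq_of_lt (by omega)]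
      have hstep := hchain (i + x.val) (by omega)
      have hvx1 : vv (x + 1) = l.get ⟨i + x.val + 1, by omega⟩ := by
        show l.get _ = _
        congr 1
        exact Fin.ext (by show i + (x + 1).val = i + x.val + 1; omega)
      rw [hvx1]
      exact hstep
  choose ee heeJ heends using hAdjs
  refine ⟨Set.range ee, ?_,
    aux_cycle_poly Γ n' hn'3 vv ee hvv_inj (fun x => hJE (heeJ x)) heends⟩
  rintro _ ⟨x, rfl⟩
  exact heeJ x

end BigGraph
section Main

variable {β : Type v} {γ : Type v}

/-- The pullback of a graph on edge type `Option β` to edge type `β`. -/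
def pullbackG (G₀ : Graph γ (Option β)) : Graph γ β where
  V := G₀.V
  E := some ⁻¹' G₀.E
  ends := fun e => G₀.ends (some e)
  finV := G₀.finV
  finE := G₀.finE.preimage ((Option.some_injective β).injOn)
  ends_mem := fun _ he _ hx => G₀.ends_mem he hx

variable {M : Matroid β} {M' : Matroid (Option β)} {G₀ : Graph γ (Option β)}

lemma aux_G₀E (hdel : deleteM M' {none} = M.map some (Option.some_injective β).injOn)
    (hcyc : IsCycleMatroidOf G₀ (contractM M' {none})) :
    G₀.E = some '' M.E := by
  rw [← hcyc.1, aux_contractM_ground, aux_ground_eq hdel]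

lemma aux_GE (hdel : deleteM M' {none} = M.map some (Option.some_injective β).injOn)
    (hcyc : IsCycleMatroidOf G₀ (contractM M' {none})) :
    (pullbackG G₀).E = M.E := by
  ext e
  show some e ∈ G₀.E ↔ e ∈ M.E
  rw [aux_G₀E hdel hcyc]
  exact (Option.some_injective β).mem_set_image

lemma aux_finE' (hz : (none : Option β) ∈ M'.E)
    (hdel : deleteM M' {none} = M.map some (Option.some_injective β).injOn)
    (hcyc : IsCycleMatroidOf G₀ (contractM M' {none})) :
    M'.E.Finite := by
  have h1 : (M'.E \ {none}).Finite := by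
    rw [aux_ground_eq hdel, ← aux_G₀E hdel hcyc]
    exact G₀.finE
  have : M'.E ⊆ insert none (M'.E \ {none}) := by
    intro x hx
    by_cases h : x = none
    · exact h ▸ Set.mem_insert _ _
    · exact Set.mem_insert_of_mem _ ⟨hx, h⟩
  exact Set.Finite.subset (h1.insert none) this

/-- Condition (3). -/
lemma aux_cond3 (hz : (none : Option β) ∈ M'.E)
    (hdel : deleteM M' {none} = M.map some (Option.some_injective β).injOn)
    (hcyc : IsCycleMatroidOf G₀ (contractM M' {none})) :
    ∀ v ∈ (pullbackG G₀).V, M.closure ((pullbackG G₀).deleteVertex v).E ⊆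
      ((pullbackG G₀).deleteVertex v).E ∪ (pullbackG G₀).loopsAt v := by
  classical
  set G := pullbackG G₀ with hGdef
  intro v hv f hf
  have hGE : G.E = M.E := aux_GE hdel hcyc
  set X := (G.deleteVertex v).E with hXdef
  have hXM : X ⊆ M.E := fun e he => hGE ▸ he.1
  have hfE : f ∈ M.E := M.closure_subset_ground _ hf
  have hfGE : f ∈ G.E := hGE.symm ▸ hfE
  by_cases hfX : f ∈ X
  · exact Set.mem_union_left _ hfX
  by_cases hdiag : G.ends f = Sym2.diag v
  · exact Set.mem_union_right _ ⟨hfGE, hdiag⟩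
  by_cases hvf : v ∈ G.ends f
  · exfalso
    obtain ⟨C₀, hC₀circ, hfC₀, hC₀sub⟩ :=
      aux_key hz hdel (aux_finE' hz hdel hcyc) hXM hfE hfX hf
    have hC₀cyc := (hcyc.2 C₀).1 hC₀circ
    obtain ⟨hC₀E, hC₀ne, hC₀conn, hC₀deg⟩ := hC₀cyc
    by_cases hg : ∃ g, g ∈ C₀ ∧ g ≠ some f ∧ v ∈ G₀.ends g
    · obtain ⟨g, hgC, hgne, hgv⟩ := hg
      rcases hC₀sub hgC with h | h
      · exact hgne h
      · obtain ⟨g₀, hg₀X, rfl⟩ := h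
        exact hg₀X.2 v hgv rfl
    · push_neg at hg
      have hnd : ¬ (G.ends f).IsDiag := by
        intro hd
        obtain ⟨a, ha⟩ : ∃ a, Sym2.diag a = G.ends f := ⟨_, Sym2.diag_diagElem hd⟩
        rw [← ha] at hvf
        exact hdiag (by rw [← ha, aux_mem_diag hvf])
      have hvV : v ∈ (G₀.restrictEdges C₀).V := by
        rw [aux_restrict_V _ hC₀E]
        exact ⟨some f, hfC₀, hvf⟩
      have hdegv : ({d ∈ (G₀.restrictEdges C₀).E | v ∈ G₀.ends d ∧ ¬ (G₀.ends d).IsDiag}).ncard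
          + 2 * ({d ∈ (G₀.restrictEdges C₀).E | G₀.ends d = Sym2.diag v}).ncard = 2 :=
        hC₀deg v hvV
      have hE₀ : (G₀.restrictEdges C₀).E = C₀ := aux_restrict_E _ hC₀E
      rw [hE₀] at hdegv
      have hA1 : {d ∈ C₀ | v ∈ G₀.ends d ∧ ¬ (G₀.ends d).IsDiag} = {some f} := by
        ext d
        simp only [Set.mem_setOf_eq, Set.mem_singleton_iff]
        constructor
        · rintro ⟨hdC, hdv, -⟩
          by_contra hne
          exact hg d hdC hne hdv
        · rintro rfl
          exact ⟨hfC₀, hvf, hnd⟩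
      have hA2 : {d ∈ C₀ | G₀.ends d = Sym2.diag v} = ∅ := by
        ext d
        simp only [Set.mem_setOf_eq, Set.mem_empty_iff_false, iff_false, not_and]
        intro hdC hd
        have hvd : v ∈ G₀.ends d := hd ▸ aux_self_mem_diag v
        rcases eq_or_ne d (some f) with rfl | hne
        · exact hdiag hd
        · exact hg d hdC hne hvd
      rw [hA1, hA2, Set.ncard_singleton, Set.ncard_empty] at hdegv
      omega
  · refine Set.mem_union_left _ ⟨hfGE, fun x hx hxv => hvf ?_⟩
    rw [Set.mem_singleton_iff] at hxv
    exact hxv ▸ hx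

end Main
section Main2

variable {β : Type v} {γ : Type v}
variable {M : Matroid β} {M' : Matroid (Option β)} {G₀ : Graph γ (Option β)}

/-- Condition (2). -/
lemma aux_cond2 (hz : (none : Option β) ∈ M'.E)
    (hdel : deleteM M' {none} = M.map some (Option.some_injective β).injOn)
    (hcyc : IsCycleMatroidOf G₀ (contractM M' {none})) :
    ∀ H : Graph γ β, H.IsComponentOf (pullbackG G₀) → rank M H.E ≤ H.V.ncard := by
  classical
  set G := pullbackG G₀ with hGdef
  intro H hH
  obtain ⟨v₀, hv₀, rfl⟩ := hH
  set W := (G.componentOf v₀).V with hWdef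
  have hWfin : W.Finite := G₀.finV.subset (Set.sep_subset _ _)
  have hWne : W.Nonempty := ⟨v₀, hv₀, Relation.ReflTransGen.refl⟩
  have hbound : ∀ I ∈ {I : Set β | M.Indep I ∧ I ⊆ (G.componentOf v₀).E},
      I.encard ≤ (W.ncard : ℕ∞) := by
    rintro I ⟨hI, hIE⟩
    obtain ⟨J, hJsub, hJN, hJcard⟩ := aux_J hz hdel hI
    have hJG₀ : J ⊆ G₀.E := hJsub.trans (by
      rw [aux_G₀E hdel hcyc]
      exact Set.image_mono hI.subset_ground)
    have hWend : ∀ e ∈ J, ∀ x, x ∈ G₀.ends e → x ∈ W := by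
      intro e' he' x hx
      obtain ⟨e, heI, rfl⟩ := hJsub he'
      have heH := hIE heI
      have hxG : x ∈ G.V := G.ends_mem heH.1 hx
      exact ⟨hxG, heH.2 x hx⟩
    have hnot : ¬ (W.ncard ≤ J.ncard) := by
      intro hle
      obtain ⟨C, hCJ, hCcyc⟩ := aux_exists_cycle G₀ W.ncard W J rfl hJG₀ hWend hWfin hWne hle
      exact ((hcyc.2 C).2 hCcyc).1.not_indep (hJN.subset hCJ)
    have hJfin : J.Finite := G₀.finE.subset hJG₀
    have hIcard : I.encard = (some '' I).encard :=
      ((Option.some_injective β).injOn.encard_image).symm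
    rw [hIcard]
    refine hJcard.trans ?_
    rw [← hJfin.cast_ncard_eq]
    rw [show ((J.ncard : ℕ∞) + 1) = ((J.ncard + 1 : ℕ) : ℕ∞) by push_cast; ring]
    exact Nat.cast_le.2 (by omega)
  show rank M (G.componentOf v₀).E ≤ W.ncard
  have hsup := iSup₂_le hbound
  calc rank M (G.componentOf v₀).E
      = (⨆ I ∈ {I : Set β | M.Indep I ∧ I ⊆ (G.componentOf v₀).E}, I.encard).toNat := rfl
    _ ≤ ((W.ncard : ℕ∞)).toNat := ENat.toNat_le_toNat hsup (by simp)
    _ = W.ncard := ENat.toNat_coe _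

end Main2
section Main3

variable {β : Type v} {γ : Type v}
variable {M : Matroid β} {M' : Matroid (Option β)} {G₀ : Graph γ (Option β)}

/-- Condition (4). -/
lemma aux_cond4 (hz : (none : Option β) ∈ M'.E)
    (hdel : deleteM M' {none} = M.map some (Option.some_injective β).injOn)
    (hcyc : IsCycleMatroidOf G₀ (contractM M' {none})) :
    ∀ C, IsCircuit M C → ((pullbackG G₀).restrictEdges C).AtMostTwoComponents := by
  classical
  set G := pullbackG G₀ with hGdef
  intro C hC u hu v hv w hw
  by_contra hcon
  push_neg at hcon
  obtain ⟨huv, huw, hvw⟩ := hcon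
  have hCM : C ⊆ M.E := hC.1.subset_ground
  have hGE := aux_GE hdel hcyc
  have hCGE : C ⊆ G.E := fun e he => hGE.symm ▸ hCM he
  have hΓE : (G.restrictEdges C).E = C := aux_restrict_E G hCGE
  set R := Relation.ReflTransGen (G.restrictEdges C).Adj with hRdef
  have hsymadj : Symmetric (G.restrictEdges C).Adj := by
    rintro x y ⟨e, he, hends⟩
    exact ⟨e, he, by rw [hends, Sym2.eq_swap]⟩
  have hsym : ∀ {x y}, R x y → R y x := fun h => (haveI : Std.Symm (G.restrictEdges C).Adj := ⟨fun a b h' => hsymadj h'⟩; Std.Symm.symm _ _ h)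
  have hkey : ∀ x, x ∈ (G.restrictEdges C).V → ∃ D, D ⊆ some '' C ∧
      (contractM M' {none}).Dep D ∧
      ∀ d ∈ D, ∃ e ∈ C, d = some e ∧ ∀ p ∈ G.ends e, R x p := by
    intro x hx
    rw [aux_restrict_V G hCGE] at hx
    obtain ⟨f, hfC, hxf⟩ := hx
    have hssub : C \ {f} ⊂ C := Set.sdiff_singleton_ssubset.2 hfC
    have hCf_ind : M.Indep (C \ {f}) := hC.2 _ hssub
    have hfcl : f ∈ M.closure (C \ {f}) := by
      have hCdep : M.Dep (insert f (C \ {f})) := by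
        rw [Set.insert_diff_singleton, Set.insert_eq_self.2 hfC]
        exact hC.1
      exact (hCf_ind.insert_dep_iff.1 hCdep).1
    obtain ⟨C₀, hC₀circ, hfC₀, hC₀sub⟩ := aux_key (X := C \ {f}) hz hdel
      (aux_finE' hz hdel hcyc) (Set.diff_subset.trans hCM) (hCM hfC) (fun h => h.2 rfl) hfcl
    have hC₀cyc := (hcyc.2 C₀).1 hC₀circ
    obtain ⟨hC₀E, hC₀ne, hC₀conn, hC₀deg⟩ := hC₀cyc
    have hC₀C : C₀ ⊆ some '' C := by
      refine hC₀sub.trans ?_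
      rw [← Set.image_insert_eq, Set.insert_diff_singleton, Set.insert_eq_self.2 hfC]
    have hE₀ : (G₀.restrictEdges C₀).E = C₀ := aux_restrict_E _ hC₀E
    have htrans : ∀ a b, (G₀.restrictEdges C₀).Adj a b → (G.restrictEdges C).Adj a b := by
      rintro a b ⟨d, hd, hends⟩
      rw [hE₀] at hd
      obtain ⟨e, heC, rfl⟩ := hC₀C hd
      exact ⟨e, by rw [hΓE]; exact heC, hends⟩
    refine ⟨C₀, hC₀C, hC₀circ.1, ?_⟩
    intro d hd
    obtain ⟨e, heC, rfl⟩ := hC₀C hd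
    refine ⟨e, heC, rfl, ?_⟩
    intro p hp
    have hxV : x ∈ (G₀.restrictEdges C₀).V := by
      rw [aux_restrict_V _ hC₀E]; exact ⟨some f, hfC₀, hxf⟩
    have hpV : p ∈ (G₀.restrictEdges C₀).V := by
      rw [aux_restrict_V _ hC₀E]; exact ⟨some e, hd, hp⟩
    exact Relation.ReflTransGen.mono htrans _ _ (hC₀conn x hxV p hpV)
  obtain ⟨Du, hDuC, hDudep, hDu⟩ := hkey u hu
  obtain ⟨Dv, hDvC, hDvdep, hDv⟩ := hkey v hv
  obtain ⟨Dw, hDwC, hDwdep, hDw⟩ := hkey w hw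
  have hdisj : ∀ {D1 D2 : Set (Option β)} {x y : γ},
      (∀ d ∈ D1, ∃ e ∈ C, d = some e ∧ ∀ p ∈ G.ends e, R x p) →
      (∀ d ∈ D2, ∃ e ∈ C, d = some e ∧ ∀ p ∈ G.ends e, R y p) →
      ¬ R x y → ∀ d, d ∈ D1 → d ∈ D2 → False := by
    intro D1 D2 x y h1 h2 hxy d hd1 hd2
    obtain ⟨e, heC, rfl, hrx⟩ := h1 d hd1
    obtain ⟨e', heC', heq, hry⟩ := h2 _ hd2
    have hee : e' = e := Option.some_injective β heq.symm
    subst hee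
    obtain ⟨a, b2, hab⟩ := aux_sym2_exists (G.ends e')
    have hpa : a ∈ G.ends e' := by rw [hab]; exact Sym2.mem_mk_left _ _
    exact hxy ((hrx a hpa).trans (hsym (hry a hpa)))
  obtain ⟨t, htC⟩ : ∃ t, t ∈ C := by
    rw [aux_restrict_V G hCGE] at hu
    obtain ⟨f, hfC, -⟩ := hu
    exact ⟨f, hfC⟩
  have htind : M.Indep (C \ {t}) := hC.2 _ (Set.sdiff_singleton_ssubset.2 htC)
  obtain ⟨J, hJsub, hJN, hJcard⟩ := aux_J hz hdel htind
  have hJC : J ⊆ some '' C := hJsub.trans (Set.image_mono Set.diff_subset)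
  have hmiss : ∀ (D : Set (Option β)), (contractM M' {none}).Dep D → ∃ d ∈ D, d ∉ J := by
    intro D hDdep
    by_contra h
    push_neg at h
    exact hDdep.not_indep (hJN.subset h)
  obtain ⟨du, hduD, hduJ⟩ := hmiss Du hDudep
  obtain ⟨dv, hdvD, hdvJ⟩ := hmiss Dv hDvdep
  obtain ⟨dw, hdwD, hdwJ⟩ := hmiss Dw hDwdep
  have hduv : du ≠ dv := fun h => hdisj hDu hDv huv du hduD (h ▸ hdvD)
  have hduw : du ≠ dw := fun h => hdisj hDu hDw huw du hduD (h ▸ hdwD)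
  have hdvw : dv ≠ dw := fun h => hdisj hDv hDw hvw dv hdvD (h ▸ hdwD)
  have hMEfin : M.E.Finite := Set.Finite.of_finite_image
    (by rw [← aux_G₀E hdel hcyc]; exact G₀.finE) ((Option.some_injective β).injOn)
  have hCfin : C.Finite := hMEfin.subset hCM
  have hC'fin : (some '' C).Finite := hCfin.image _
  have hJfin : J.Finite := hC'fin.subset hJC
  have h3 : ({du, dv, dw} : Set (Option β)).encard = 3 := by
    rw [Set.encard_insert_of_notMem (by simp [hduv, hduw]),
      Set.encard_insert_of_notMem (by simp [hdvw]), Set.encard_singleton]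
    norm_num
  have hsub3 : ({du, dv, dw} : Set (Option β)) ⊆ (some '' C) \ J := by
    rintro d (rfl | rfl | rfl)
    · exact ⟨hDuC hduD, hduJ⟩
    · exact ⟨hDvC hdvD, hdvJ⟩
    · exact ⟨hDwC hdwD, hdwJ⟩
  have h3le : (3 : ℕ∞) ≤ ((some '' C) \ J).encard := h3 ▸ Set.encard_mono hsub3
  have hsplit : ((some '' C) \ J).encard + J.encard = (some '' C).encard :=
    Set.encard_diff_add_encard_of_subset hJC
  have hupper : (some '' C).encard ≤ J.encard + 2 := by
    have h1 : insert (some t) (some '' (C \ {t})) = some '' C := by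
      rw [← Set.image_insert_eq, Set.insert_diff_singleton, Set.insert_eq_self.2 htC]
    have hnotmem : (some t) ∉ some '' (C \ {t}) := by
      rintro ⟨s, hs, hseq⟩
      exact hs.2 (Option.some_injective β hseq)
    calc (some '' C).encard = (some '' (C \ {t})).encard + 1 := by
          rw [← h1, Set.encard_insert_of_notMem hnotmem]
      _ ≤ (J.encard + 1) + 1 := add_le_add_left hJcard 1
      _ = J.encard + 2 := by ring
  have hJtop : J.encard ≠ ⊤ := hJfin.encard_lt_top.ne
  have hbad : J.encard + 3 ≤ J.encard + 2 := by
    calc J.encard + 3 ≤ J.encard + ((some '' C) \ J).encard := add_le_add_right h3le _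
      _ = (some '' C).encard := by rw [add_comm]; exact hsplit
      _ ≤ J.encard + 2 := hupper
  rw [ENat.add_le_add_iff_left hJtop] at hbad
  exact absurd hbad (by norm_num)

end Main3
/-- Every lifted-graphic matroid is quasi-graphic, i.e. every
lifted-graphic matroid has a framework. -/
theorem statement1 {β : Type v} (M : Matroid β) (h : LiftedGraphic M) :
    QuasiGraphic M := by
  obtain ⟨M', hz, hdel, γ, G₀, hcyc⟩ := h
  exact ⟨γ, pullbackG G₀,
    ⟨⟨aux_GE hdel hcyc, aux_cond2 hz hdel hcyc, aux_cond3 hz hdel hcyc⟩,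
      aux_cond4 hz hdel hcyc⟩⟩

end QuasiGraphicPaper
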